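/- arXiv:2007.01779 — 2 statements merged into one kernel-verified Lean document; each statement's English description precedes it below -/
import Mathlib

section
/- Let Δ be a valued structure with finite domain D. Let m ∈ ℕ, and suppose the promise valued template (Δ, Γ) (where Γ has possibly infinite domain C) has a fully symmetric promise fractional polymorphism ω of arity m. Then the multiset-structure P^m(Δ) is fractionally homomorphic to Γ. -/
open scoped BigOperators NNReal
open Function

noncomputable section

/-- Costs take values in `ℚ ∪ {+∞}`. -/
abbrev Cost := WithTop ℚ

/-- Embedding of extended rationals into the extended reals. -/
def toE (x : Cost) : EReal := WithTop.recTopCoe ⊤ (fun q : ℚ => ((q : ℝ) : EReal)) x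

/-- A valued structure over signature `τ` (with arities `ar`) and domain `C`. -/
structure VStruct (τ : Type) (ar : τ → ℕ) (C : Type) where
  cost : (f : τ) → ((Fin (ar f)) → C) → Cost

/-- A fractional homomorphism from `Δ` (domain `D`) to `Γ` (domain `C`): a discrete
probability measure on maps `D → C` (given by its weight function, which has countable,
non-empty support and total mass `1`) such that for every function symbol and every tuple
the expected cost in `Γ` is at most the cost in `Δ`. -/
structure FracHom {τ : Type} {ar : τ → ℕ} {D C : Type}
    (Δ : VStruct τ ar D) (Γ : VStruct τ ar C) where
  w : (D → C) → ℝ≥0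
  countable_support : (Function.support w).Countable
  support_nonempty : (Function.support w).Nonempty
  total : HasSum w 1
  le : ∀ (f : τ) (a : Fin (ar f) → D),
    (∑' h : D → C, ((w h : ℝ) : EReal) * toE (Γ.cost f (fun i => h (a i))))
      ≤ toE (Δ.cost f a)

/-- An `m`-ary promise fractional polymorphism of a pair `(Δ, Γ)`: a probability
distribution `wI` supported exactly on the `m` projections (recorded by its weights on
indices), together with a discrete probability measure `wO` on maps `(Fin m → D) → C`
with countable non-empty support, satisfying the expected-cost inequality. -/
structure PFracPol {τ : Type} {ar : τ → ℕ} {D C : Type}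
    (Δ : VStruct τ ar D) (Γ : VStruct τ ar C) (m : ℕ) where
  wI : Fin m → ℝ≥0
  wI_pos : ∀ i, 0 < wI i
  wI_total : ∑ i, wI i = 1
  wO : ((Fin m → D) → C) → ℝ≥0
  wO_countable : (Function.support wO).Countable
  wO_nonempty : (Function.support wO).Nonempty
  wO_total : HasSum wO 1
  le : ∀ (f : τ) (a : Fin m → (Fin (ar f) → D)),
    (∑' g : (Fin m → D) → C,
        ((wO g : ℝ) : EReal) * toE (Γ.cost f (fun t => g (fun i => a i t))))
      ≤ ∑ i, ((wI i : ℝ) : EReal) * toE (Δ.cost f (a i))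

open Classical in
/-- The multiset-structure `P^m(Δ)`: its domain consists of multisets over `D` of size
`m`, and each cost is `1/m` times the minimum, over tuples `t^1, …, t^k ∈ D^m` whose
multisets of coordinates realise the given multisets, of the total cost. -/
def msStruct {τ : Type} {ar : τ → ℕ} {D : Type} [Fintype D] [DecidableEq D]
    (Δ : VStruct τ ar D) (m : ℕ) : VStruct τ ar (Sym D m) where
  cost f p :=
    (((1 : ℚ) / m : ℚ) : Cost) *
      (Finset.univ.inf fun t : Fin (ar f) → Fin m → D =>
        if (∀ ℓ, Multiset.map (t ℓ) (Finset.univ : Finset (Fin m)).val = ((p ℓ) : Multiset D))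
        then ∑ i : Fin m, Δ.cost f (fun ℓ => t ℓ i) else ⊤)

/-- Full symmetry of a promise fractional polymorphism: every map in its output support
is invariant under all permutations of its `m` arguments. -/
def PFracPol.IsFullySym {τ : Type} {ar : τ → ℕ} {D C : Type}
    {Δ : VStruct τ ar D} {Γ : VStruct τ ar C} {m : ℕ} (ω : PFracPol Δ Γ m) : Prop :=
  ∀ g ∈ Function.support ω.wO, ∀ π : Equiv.Perm (Fin m),
    ∀ x : Fin m → D, g (fun i => x (π i)) = g x

-- ### auxiliary lemmas

lemma exists_perm_of_map_univ_eq {α : Type*} [LinearOrder α] {m : ℕ} {x y : Fin m → α}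
    (h : Multiset.map x (Finset.univ : Finset (Fin m)).val
       = Multiset.map y (Finset.univ : Finset (Fin m)).val) :
    ∃ σ : Equiv.Perm (Fin m), (fun i => x (σ i)) = y := by
  have hval : (Finset.univ : Finset (Fin m)).val = ↑(List.finRange m) := by
    simp [Finset.univ, Fintype.elems, Fin.fintype]
  have hperm : List.Perm (List.ofFn x) (List.ofFn y) := by
    rw [List.ofFn_eq_map, List.ofFn_eq_map, ← Multiset.coe_eq_coe,
      ← Multiset.map_coe, ← Multiset.map_coe, ← hval]
    exact h
  have hx := Tuple.monotone_sort x
  have hy := Tuple.monotone_sort y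
  have hxy : x ∘ Tuple.sort x = y ∘ Tuple.sort y := by
    apply List.ofFn_injective
    refine List.Perm.eq_of_sortedLE hx.sortedLE_ofFn hy.sortedLE_ofFn ?_
    exact ((Equiv.Perm.ofFn_comp_perm _ x).trans hperm).trans
      (Equiv.Perm.ofFn_comp_perm _ y).symm
  refine ⟨(Tuple.sort y).symm.trans (Tuple.sort x), funext fun i => ?_⟩
  have := congrFun hxy ((Tuple.sort y).symm i)
  simpa using this

lemma map_univ_eq_ofFn {α : Type*} {m : ℕ} (x : Fin m → α) :
    Multiset.map x (Finset.univ : Finset (Fin m)).val = ↑(List.ofFn x) := by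
  have hval : (Finset.univ : Finset (Fin m)).val = ↑(List.finRange m) := by
    simp [Finset.univ, Fintype.elems, Fin.fintype]
  rw [hval, List.ofFn_eq_map, Multiset.map_coe]

lemma sq_surj' {α : Type*} {m : ℕ} (s : Multiset α) (hs : Multiset.card s = m) :
    ∃ x : Fin m → α, Multiset.map x (Finset.univ : Finset (Fin m)).val = s := by
  have hlen : s.toList.length = m := by rw [Multiset.length_toList, hs]
  refine ⟨fun i => s.toList.get (Fin.cast hlen.symm i), ?_⟩
  rw [map_univ_eq_ofFn]
  have : List.ofFn (fun i : Fin m => s.toList.get (Fin.cast hlen.symm i)) = s.toList := by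
    apply List.ext_getElem
    · simp [hlen]
    · intro n h1 h2; simp
  rw [this, Multiset.coe_toList]

lemma exists_shift {m : ℕ} (hm : 0 < m) (w : Fin m → ℝ) (hw : ∑ i, w i = 1) (c : Fin m → ℝ) :
    ∃ k : Fin m, ∑ i, w i * c (k + i) ≤ (1 / m) * ∑ j, c j := by
  haveI : NeZero m := ⟨hm.ne'⟩
  haveI : Nonempty (Fin m) := Fin.pos_iff_nonempty.mp hm
  have key : ∑ k : Fin m, (∑ i, w i * c (k + i))
      = ∑ k : Fin m, (1 / m) * ∑ j, c j := by
    rw [Finset.sum_comm]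
    have h1 : ∀ i : Fin m, ∑ k : Fin m, w i * c (k + i) = w i * ∑ j, c j := by
      intro i
      rw [← Finset.mul_sum]
      congr 1
      exact Fintype.sum_equiv (Equiv.addRight i) _ _ (fun k => rfl)
    simp only [h1, ← Finset.sum_mul, hw, one_mul]
    rw [Finset.sum_const, Finset.card_univ, Fintype.card_fin, nsmul_eq_mul]
    field_simp
  obtain ⟨k, -, hk⟩ := Finset.exists_le_of_sum_le Finset.univ_nonempty key.le
  exact ⟨k, hk⟩

lemma EReal.coe_finsetSum {ι : Type*} (s : Finset ι) (f : ι → ℝ) :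
    ((∑ i ∈ s, f i : ℝ) : EReal) = ∑ i ∈ s, ((f i : ℝ) : EReal) :=
  map_sum (⟨⟨Real.toEReal, EReal.coe_zero⟩, EReal.coe_add⟩ : ℝ →+ EReal) f s

lemma toE_coe (q : ℚ) : toE ((q : ℚ) : Cost) = ((q : ℝ) : EReal) := rfl

lemma toE_top : toE (⊤ : Cost) = ⊤ := rfl


/-- if the promise valued template `(Δ, Γ)` (with `Δ` over a finite domain)
has a fully symmetric promise fractional polymorphism of arity `m`, then the
multiset-structure `P^m(Δ)` is fractionally homomorphic to `Γ`. -/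
theorem msStruct_fracHom {τ : Type} {ar : τ → ℕ} {D C : Type} [Fintype D] [DecidableEq D]
    (Δ : VStruct τ ar D) (Γ : VStruct τ ar C) (_template : Nonempty (FracHom Δ Γ))
    (m : ℕ) (ω : PFracPol Δ Γ m) (hω : ω.IsFullySym) :
    Nonempty (FracHom (msStruct Δ m) Γ) := by
  have hm : 0 < m := by
    rcases Nat.eq_zero_or_pos m with h0 | h
    · exfalso
      have h1 := ω.wI_total
      subst h0
      simp at h1
    · exact h
  haveI : NeZero m := ⟨hm.ne'⟩
  letI : LinearOrder D := LinearOrder.lift' (Fintype.equivFin D) (Equiv.injective _)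
  set sq : (Fin m → D) → Sym D m := fun x =>
    ⟨Multiset.map x (Finset.univ : Finset (Fin m)).val, by simp⟩ with hsqdef
  have hsq_surj : Function.Surjective sq := by
    rintro ⟨s, hs⟩
    obtain ⟨x, hx⟩ := sq_surj' s hs
    exact ⟨x, Subtype.ext hx⟩
  have hsq_perm : ∀ x y : Fin m → D, sq x = sq y →
      ∃ σ : Equiv.Perm (Fin m), (fun i => x (σ i)) = y := by
    intro x y h
    exact exists_perm_of_map_univ_eq (congrArg Subtype.val h)
  have hsq_comp : ∀ (x : Fin m → D) (σ : Equiv.Perm (Fin m)), sq (fun i => x (σ i)) = sq x := by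
    intro x σ
    have hval : Multiset.map (fun i => x (σ i)) (Finset.univ : Finset (Fin m)).val
        = Multiset.map x (Finset.univ : Finset (Fin m)).val := by
      conv_rhs => rw [← Finset.map_univ_equiv σ]
      rw [Finset.map_val, Multiset.map_map]
      rfl
    exact Subtype.ext hval
  set ι : (Sym D m → C) → ((Fin m → D) → C) := fun h x => h (sq x) with hιdef
  have hι_inj : Function.Injective ι := by
    intro h1 h2 he
    funext p
    obtain ⟨x, rfl⟩ := hsq_surj p
    exact congrFun he x
  have hrange : ∀ g, ω.wO g ≠ 0 → g ∈ Set.range ι := by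
    intro g hg
    refine ⟨fun p => g (hsq_surj p).choose, funext fun x => ?_⟩
    have hx : sq (hsq_surj (sq x)).choose = sq x := (hsq_surj (sq x)).choose_spec
    obtain ⟨σ, hσ⟩ := hsq_perm _ _ hx.symm
    show g (hsq_surj (sq x)).choose = g x
    rw [← hσ]
    exact hω g hg σ x
  have hvanish : ∀ g, g ∉ Set.range ι → ω.wO g = 0 := by
    intro g hg
    by_contra h
    exact hg (hrange g h)
  refine ⟨⟨fun h => ω.wO (ι h), ?_, ?_, ?_, ?_⟩⟩
  · exact ω.wO_countable.preimage hι_inj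
  · obtain ⟨g, hg⟩ := ω.wO_nonempty
    obtain ⟨h, rfl⟩ := hrange g hg
    exact ⟨h, hg⟩
  · exact (hι_inj.hasSum_iff hvanish).mpr ω.wO_total
  · intro f a
    have hcost : (msStruct Δ m).cost f a = (((1 : ℚ) / m : ℚ) : Cost) *
        (Finset.univ.inf fun t : Fin (ar f) → Fin m → D =>
          if (∀ ℓ, Multiset.map (t ℓ) (Finset.univ : Finset (Fin m)).val = ((a ℓ) : Multiset D))
          then ∑ i : Fin m, Δ.cost f (fun ℓ => t ℓ i) else ⊤) := rfl
    set F : (Fin (ar f) → Fin m → D) → Cost := fun t =>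
      if (∀ ℓ, Multiset.map (t ℓ) (Finset.univ : Finset (Fin m)).val = ((a ℓ) : Multiset D))
      then ∑ i : Fin m, Δ.cost f (fun ℓ => t ℓ i) else ⊤ with hF
    rw [hcost]
    by_cases hinf : Finset.univ.inf F = ⊤
    · rw [hinf, WithTop.mul_top, toE_top]
      · exact le_top
      · exact_mod_cast one_div_ne_zero (by exact_mod_cast hm.ne' : (m : ℚ) ≠ 0)
    · have hne : (Finset.univ : Finset (Fin (ar f) → Fin m → D)).Nonempty := by
        rcases (Finset.univ : Finset (Fin (ar f) → Fin m → D)).eq_empty_or_nonempty with h | h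
        · rw [h] at hinf; simp at hinf
        · exact h
      obtain ⟨t, -, ht⟩ := Finset.exists_mem_eq_inf Finset.univ hne F
      have hFt : F t ≠ ⊤ := fun h => hinf (ht.trans h)
      have hcond : ∀ ℓ, Multiset.map (t ℓ) (Finset.univ : Finset (Fin m)).val
          = ((a ℓ) : Multiset D) := by
        by_contra h
        exact hFt (if_neg h)
      have hFt' : F t = ∑ i : Fin m, Δ.cost f (fun ℓ => t ℓ i) := if_pos hcond
      have hlt : ∀ i : Fin m, Δ.cost f (fun ℓ => t ℓ i) ≠ ⊤ := by
        have hsum : (∑ i : Fin m, Δ.cost f (fun ℓ => t ℓ i)) ≠ ⊤ := fun h => hFt (hFt'.trans h)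
        intro i
        exact ((WithTop.sum_lt_top.mp (lt_top_iff_ne_top.mpr hsum)) i (Finset.mem_univ i)).ne
      choose c hc using fun i => WithTop.ne_top_iff_exists.mp (hlt i)
      have hwsum : (∑ i, ((ω.wI i : ℝ))) = 1 := by
        rw [← NNReal.coe_sum, ω.wI_total, NNReal.coe_one]
      obtain ⟨k, hk⟩ := exists_shift hm (fun i => (ω.wI i : ℝ)) hwsum (fun i => (c i : ℝ))
      -- identify our tsum with the tsum of ω.le applied to the shifted tuple
      have hsupp : Function.support (fun g : (Fin m → D) → C =>
          ((ω.wO g : ℝ) : EReal) * toE (Γ.cost f (fun ℓ => g (fun i => t ℓ (k + i)))))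
          ⊆ Set.range ι := by
        intro g hg
        apply hrange
        intro h0
        apply hg
        simp [h0]
      have hLHS := Function.Injective.tsum_eq (f := fun g : (Fin m → D) → C =>
        ((ω.wO g : ℝ) : EReal) * toE (Γ.cost f (fun ℓ => g (fun i => t ℓ (k + i)))))
        hι_inj hsupp
      have hterm : ∀ h : Sym D m → C,
          (fun ℓ => (ι h) (fun i => t ℓ (k + i))) = (fun i => h (a i)) := by
        intro h
        funext ℓ
        show h (sq fun i => t ℓ (k + i)) = h (a ℓ)
        congr 1
        have h1 : sq (fun i : Fin m => t ℓ ((Equiv.addLeft k) i)) = sq (t ℓ) :=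
          hsq_comp (t ℓ) (Equiv.addLeft k)
        have h2 : (fun i : Fin m => t ℓ ((Equiv.addLeft k) i)) = fun i => t ℓ (k + i) := rfl
        rw [← h2, h1]
        exact Subtype.ext (hcond ℓ)
      have hmain : (∑' h : Sym D m → C,
          ((ω.wO (ι h) : ℝ) : EReal) * toE (Γ.cost f (fun i => h (a i))))
          = ∑' g : (Fin m → D) → C,
            ((ω.wO g : ℝ) : EReal) * toE (Γ.cost f (fun ℓ => g (fun i => t ℓ (k + i)))) := by
          rw [← hLHS]
          exact tsum_congr fun h => by beta_reduce; rw [hterm h]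
      refine le_trans (hmain.le.trans (ω.le f (fun i ℓ => t ℓ (k + i)))) ?_
      -- now both sides are finite reals
      have hRHS : (∑ i, ((ω.wI i : ℝ) : EReal) * toE (Δ.cost f (fun ℓ => t ℓ (k + i))))
          = (((∑ i, (ω.wI i : ℝ) * ((c (k + i) : ℚ) : ℝ)) : ℝ) : EReal) := by
        rw [EReal.coe_finsetSum]
        refine Finset.sum_congr rfl fun i _ => ?_
        rw [← hc (k + i), toE_coe, EReal.coe_mul]
      rw [hRHS]
      have htarget : (((1 : ℚ) / m : ℚ) : Cost) * Finset.univ.inf F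
          = (((1 : ℚ) / m * ∑ i, c i : ℚ) : Cost) := by
        rw [ht, hFt']
        rw [show (∑ i : Fin m, Δ.cost f (fun ℓ => t ℓ i)) = ((∑ i, c i : ℚ) : Cost) by
          rw [WithTop.coe_sum]; exact Finset.sum_congr rfl fun i _ => (hc i).symm]
        norm_cast
      rw [htarget, toE_coe]
      rw [EReal.coe_le_coe_iff]
      apply le_trans hk
      push_cast
      ring_nf
      rfl
end
end

section
/- A valued structure Γ with domain ℚ whose cost functions are all (wma, avg)-convex has, for every m ∈ ℕ, a (2m+1)-ary block-symmetric fractional polymorphism ω^{(2m+1)} defined by ω^{(2m+1)}(g) = 1 if g = wma^{(2m+1)} and 0 otherwise; i.e., the deterministic measure concentrated on the (2m+1)-ary 2-period weighted centred moving average is a fractional polymorphism of Γ. -/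
open scoped BigOperators NNReal
open Function

noncomputable section

/-- An `m`-ary fractional polymorphism of a valued structure `Γ` with domain `C`. -/
structure FracPol {τ : Type} {ar : τ → ℕ} {C : Type} (Γ : VStruct τ ar C) (m : ℕ) where
  w : ((Fin m → C) → C) → ℝ≥0
  countable_support : (Function.support w).Countable
  support_nonempty : (Function.support w).Nonempty
  total : HasSum w 1
  le : ∀ (f : τ) (a : Fin m → (Fin (ar f) → C)),
    (∑' g : (Fin m → C) → C,
        ((w g : ℝ) : EReal) * toE (Γ.cost f (fun t => g (fun i => a i t))))
      ≤ (((1 : ℝ) / m : ℝ) : EReal) * ∑ i, toE (Γ.cost f (a i))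

/-- The `k`-ary 2-period weighted centred moving average (indices run over `1, …, k`,
realised as `i+1` for `i : Fin k`). -/
def wma (k : ℕ) (x : Fin k → ℚ) : ℚ :=
  (1 / (3 * (k : ℚ))) *
    ((∑ i : Fin k, if (i : ℕ) + 1 ≤ k / 4 then x i else 0) +
     2 * (∑ i : Fin k, if k / 4 < (i : ℕ) + 1 ∧ (i : ℕ) + 1 ≤ 3 * k / 4 then x i else 0) +
     (∑ i : Fin k, if 3 * k / 4 < (i : ℕ) + 1 then x i else 0))

/-- The outer block `B_1 = {1, …, ⌊k/4⌋} ∪ {⌊3k/4⌋+1, …, k}`. -/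
def wmaB1 (k : ℕ) : Finset (Fin k) :=
  Finset.univ.filter fun i => (i : ℕ) + 1 ≤ k / 4 ∨ 3 * k / 4 < (i : ℕ) + 1

/-- The middle block `B_2 = {⌊k/4⌋+1, …, ⌊3k/4⌋}`. -/
def wmaB2 (k : ℕ) : Finset (Fin k) :=
  Finset.univ.filter fun i => k / 4 < (i : ℕ) + 1 ∧ (i : ℕ) + 1 ≤ 3 * k / 4

lemma toE_le_toE {a b : Cost} (h : a ≤ b) : toE a ≤ toE b := by
  induction b using WithTop.recTopCoe with
  | top => simp [toE]
  | coe q =>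
    induction a using WithTop.recTopCoe with
    | top => exact absurd h (by simp)
    | coe p =>
      simp only [toE, WithTop.recTopCoe_coe]
      have hpq : p ≤ q := by exact_mod_cast h
      exact_mod_cast hpq

lemma toE_ne_bot (a : Cost) : toE a ≠ ⊥ := by
  induction a using WithTop.recTopCoe with
  | top => simp [toE]
  | coe p => simp [toE]

lemma toE_add (a b : Cost) : toE (a + b) = toE a + toE b := by
  induction a using WithTop.recTopCoe with
  | top =>
    simp only [toE, WithTop.recTopCoe_top, top_add]
    exact (EReal.top_add_of_ne_bot (toE_ne_bot b)).symm
  | coe p =>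
    induction b using WithTop.recTopCoe with
    | top =>
      simp only [toE, WithTop.recTopCoe_top, WithTop.recTopCoe_coe]
      rw [show ((p : Cost) + ⊤ : Cost) = ⊤ from add_top _]
      simp only [toE, WithTop.recTopCoe_top]
      rw [EReal.add_top_of_ne_bot (by simp)]
    | coe q =>
      rw [show ((p : Cost) + (q : Cost) : Cost) = ((p + q : ℚ) : Cost) from rfl]
      simp only [toE, WithTop.recTopCoe_coe]
      norm_cast

lemma toE_sum {ι : Type*} (s : Finset ι) (f : ι → Cost) :
    toE (∑ i ∈ s, f i) = ∑ i ∈ s, toE (f i) := by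
  classical
  induction s using Finset.induction with
  | empty =>
    rw [Finset.sum_empty, Finset.sum_empty]
    show ((((0:ℚ):ℝ)):EReal) = 0
    norm_num
  | insert _ _ h ih => rw [Finset.sum_insert h, Finset.sum_insert h, toE_add, ih]

lemma toE_qmul {q : ℚ} (hq : 0 < q) (s : Cost) :
    toE ((q : Cost) * s) = ((q : ℝ) : EReal) * toE s := by
  induction s using WithTop.recTopCoe with
  | top =>
    rw [WithTop.mul_top (by exact_mod_cast hq.ne')]
    simp only [toE, WithTop.recTopCoe_top]
    exact (EReal.coe_mul_top_of_pos (by exact_mod_cast hq)).symm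
  | coe r =>
    rw [show ((q : Cost) * (r : Cost) : Cost) = ((q * r : ℚ) : Cost) from rfl]
    simp only [toE, WithTop.recTopCoe_coe]
    norm_cast

lemma wma_eq (k : ℕ) (x : Fin k → ℚ) :
    wma k x = (1 / (3 * (k : ℚ))) *
      ((∑ i ∈ wmaB1 k, x i) + 2 * ∑ i ∈ wmaB2 k, x i) := by
  classical
  unfold wma wmaB1 wmaB2
  rw [← Finset.sum_filter, ← Finset.sum_filter, ← Finset.sum_filter]
  have hdisj : Disjoint (Finset.univ.filter fun i : Fin k => (i : ℕ) + 1 ≤ k / 4)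
      (Finset.univ.filter fun i : Fin k => 3 * k / 4 < (i : ℕ) + 1) := by
    rw [Finset.disjoint_left]
    intro i h1 h2
    simp only [Finset.mem_filter] at h1 h2
    have hle : k / 4 ≤ 3 * k / 4 := Nat.div_le_div_right (by omega)
    omega
  rw [Finset.filter_or, Finset.sum_union hdisj]
  ring

lemma wma_perm {k : ℕ} (π : Equiv.Perm (Fin k))
    (h1 : ∀ i, π i ∈ wmaB1 k ↔ i ∈ wmaB1 k)
    (h2 : ∀ i, π i ∈ wmaB2 k ↔ i ∈ wmaB2 k)
    (x : Fin k → ℚ) : wma k (fun i => x (π i)) = wma k x := by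
  rw [wma_eq, wma_eq]
  have e1 : ∑ i ∈ wmaB1 k, x (π i) = ∑ i ∈ wmaB1 k, x i :=
    Finset.sum_equiv π (fun i => (h1 i).symm) (fun i _ => rfl)
  have e2 : ∑ i ∈ wmaB2 k, x (π i) = ∑ i ∈ wmaB2 k, x i :=
    Finset.sum_equiv π (fun i => (h2 i).symm) (fun i _ => rfl)
  rw [e1, e2]

open Classical in
/-- if every cost function of a valued structure `Γ` with domain `ℚ` is
`(wma, avg)`-convex, then for every `m`, the deterministic measure concentrated on the
`(2m+1)`-ary 2-period weighted centred moving average is a fractional polymorphism of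
`Γ`, and it is block-symmetric (every map in its support is invariant under permutations
preserving the two blocks of `wma`). -/
theorem wma_fracPol {τ : Type} {ar : τ → ℕ} (Γ : VStruct τ ar ℚ)
    (hconv : ∀ (f : τ) (k : ℕ), 0 < k → ∀ xs : Fin k → (Fin (ar f) → ℚ),
      Γ.cost f (fun t => wma k (fun i => xs i t))
        ≤ (((1 : ℚ) / k : ℚ) : Cost) * ∑ i : Fin k, Γ.cost f (xs i)) :
    ∀ m : ℕ, ∃ ω : FracPol Γ (2 * m + 1),
      ω.w = (fun g => if g = wma (2 * m + 1) then 1 else 0) ∧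
      (∀ g ∈ Function.support ω.w, ∀ π : Equiv.Perm (Fin (2 * m + 1)),
        (∀ i, π i ∈ wmaB1 (2 * m + 1) ↔ i ∈ wmaB1 (2 * m + 1)) →
        (∀ i, π i ∈ wmaB2 (2 * m + 1) ↔ i ∈ wmaB2 (2 * m + 1)) →
        ∀ x : Fin (2 * m + 1) → ℚ, g (fun i => x (π i)) = g x) := by
  intro m
  set k := 2 * m + 1 with hk
  have hsupp : Function.support (fun g : (Fin k → ℚ) → ℚ =>
      if g = wma k then (1 : ℝ≥0) else 0) = {wma k} := by
    ext g
    simp [Function.mem_support]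
  refine ⟨⟨fun g => if g = wma k then 1 else 0, ?_, ?_, ?_, ?_⟩, rfl, ?_⟩
  · rw [hsupp]; exact Set.countable_singleton _
  · rw [hsupp]; exact ⟨wma k, rfl⟩
  · exact hasSum_ite_eq (wma k) 1
  · intro f a
    have htsum : (∑' g : (Fin k → ℚ) → ℚ,
        (((if g = wma k then (1 : ℝ≥0) else 0 : ℝ≥0) : ℝ) : EReal) *
          toE (Γ.cost f (fun t => g (fun i => a i t))))
        = toE (Γ.cost f (fun t => wma k (fun i => a i t))) := by
      rw [tsum_eq_single (wma k)]
      · simp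
      · intro g hg
        simp [hg]
    rw [htsum]
    have key := hconv f k (by omega) a
    have := toE_le_toE key
    refine this.trans_eq ?_
    rw [toE_qmul (by positivity), toE_sum]
    congr 2
    push_cast
    ring
  · intro g hg π hπ1 hπ2 x
    rw [hsupp] at hg
    rw [Set.mem_singleton_iff] at hg
    subst hg
    exact wma_perm π hπ1 hπ2 x
end
end
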